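/- Let R be a finite commutative ring that is not reduced (has a nonzero nilpotent). Then any two distinct vertices of the nil clean divisor graph G_N(R) are at distance at most 2: either they are adjacent or they have a common neighbor. -/

import Mathlib

def IsNilCleanElem {R : Type*} [CommRing R] (x : R) : Prop :=
  ∃ e n : R, IsIdempotentElem e ∧ IsNilpotent n ∧ x = e + n

def NCVertex {R : Type*} [CommRing R] (x : R) : Prop :=
  x ≠ 0 ∧ ∃ y : R, y ≠ 0 ∧ y ≠ x ∧ IsNilCleanElem (x * y)

def NCAdj {R : Type*} [CommRing R] (x y : R) : Prop :=
  x ≠ y ∧ NCVertex x ∧ NCVertex y ∧ IsNilCleanElem (x * y)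

lemma nilpotent_nilclean {R : Type*} [CommRing R] {m : R} (h : IsNilpotent m) :
    IsNilCleanElem m :=
  ⟨0, m, by simp [IsIdempotentElem], h, by ring⟩

lemma mul_nilpotent_nilclean {R : Type*} [CommRing R] {n : R} (h : IsNilpotent n) (x : R) :
    IsNilCleanElem (x * n) :=
  nilpotent_nilclean (Commute.isNilpotent_mul_left (Commute.all x n) h)

theorem stmt8 {R : Type*} [CommRing R] [Fintype R] [Nontrivial R]
    (hnr : ∃ n : R, n ≠ 0 ∧ IsNilpotent n) :
    ∀ x y : R, NCVertex x → NCVertex y → x ≠ y →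
      (NCAdj x y ∨ ∃ a : R, NCAdj x a ∧ NCAdj a y) := by
  obtain ⟨n, hn0, hnil⟩ := hnr
  have hn1 : n ≠ 1 := by
    rintro rfl
    obtain ⟨k, hk⟩ := hnil
    simp at hk
  have hnv : NCVertex n :=
    ⟨hn0, 1, one_ne_zero, fun h => hn1 h.symm, by
      simpa using nilpotent_nilclean hnil⟩
  intro x y hx hy hxy
  by_cases hxn : x = n
  · subst hxn
    exact Or.inl ⟨hxy, hx, hy, by
      simpa [mul_comm] using mul_nilpotent_nilclean hnil y⟩
  by_cases hyn : y = n
  · subst hyn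
    exact Or.inl ⟨hxy, hx, hy, mul_nilpotent_nilclean hnil x⟩
  · exact Or.inr ⟨n, ⟨hxn, hx, hnv, mul_nilpotent_nilclean hnil x⟩,
      ⟨fun h => hyn h.symm, hnv, hy, by
        simpa [mul_comm] using mul_nilpotent_nilclean hnil y⟩⟩
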